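/- Let a and s be complex numbers with s² = 9 − 8a, and let k be a natural number. Assume that (a−1) + m ≠ 0, (1 − a − k) + m ≠ 0, (2a − 5/2 − s/2) + m ≠ 0 and (2a − 5/2 + s/2) + m ≠ 0 for every natural number m < k (in particular a ≠ 1). Then [(a+k−1) / ((a−1) · k!)] · ∑_{j=0}^{k} (a)_j (2−a−k)_j (−k)_j (−1)^j / ((a−1)_j (1−a−k)_j · j!) = [(2a − 3/2 − s/2)_k · (2a − 3/2 + s/2)_k] / [(2a − 5/2 − s/2)_k · (2a − 5/2 + s/2)_k] · 2^k / k!. (This is a ₃F₂(−1) evaluation by a nonrational hypergeometric term.) -/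

import Mathlib

/-- Rising factorial (Pochhammer symbol) `(z)_n` over the complex numbers. -/
noncomputable def poch (z : ℂ) (n : ℕ) : ℂ := (ascPochhammer ℂ n).eval z

lemma poch_zero (x : ℂ) : poch x 0 = 1 := by simp [poch]

lemma poch_succ (x : ℂ) (n : ℕ) : poch x (n+1) = poch x n * (x + n) := by
  simp [poch, ascPochhammer_succ_eval]

lemma poch_ne_zero (x : ℂ) (n : ℕ) (h : ∀ m : ℕ, m < n → x + m ≠ 0) : poch x n ≠ 0 := by
  induction n with
  | zero => simp [poch_zero]
  | succ n ih =>
      rw [poch_succ]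
      exact mul_ne_zero (ih fun m hm => h m (hm.trans (Nat.lt_succ_self n)))
        (h n (Nat.lt_succ_self n))

lemma poch_shift (x : ℂ) (n : ℕ) : poch (x+1) n * x = poch x n * (x + n) := by
  induction n with
  | zero => simp [poch_zero]
  | succ n ih =>
      rw [poch_succ, poch_succ]
      push_cast
      calc poch (x+1) n * (x + 1 + n) * x = poch (x+1) n * x * (x + 1 + n) := by ring
        _ = poch x n * (x + n) * (x + 1 + n) := by rw [ih]
        _ = poch x n * (x + n) * (x + (n+1)) := by ring

lemma poch_neg_nat (n j : ℕ) : poch (-(n:ℂ)) j = (-1:ℂ)^j * (n.descFactorial j : ℂ) := by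
  rw [poch, ascPochhammer_eval_neg_eq_descPochhammer,
    descPochhammer_eval_eq_descFactorial]

lemma binom_quad (k : ℕ) : ∀ x y : ℂ,
    ∑ j ∈ Finset.range (k+1), (k.choose j : ℂ) * ((x+j)*(y+j))
      = 2^k * (x*y + k*(x+y)/2 + k*(k+1)/4) := by
  induction k with
  | zero => intro x y; simp
  | succ k ih =>
      intro x y
      have split := Finset.sum_choose_succ_mul (fun i _ => (x+(i:ℂ))*(y+(i:ℂ))) k
      rw [split]
      have e2 : ∑ i ∈ Finset.range (k+1), (k.choose i : ℂ) * ((x+((i+1:ℕ):ℂ))*(y+((i+1:ℕ):ℂ)))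
          = ∑ i ∈ Finset.range (k+1), (k.choose i : ℂ) * (((x+1)+(i:ℂ))*((y+1)+(i:ℂ))) := by
        refine Finset.sum_congr rfl fun i _ => ?_
        push_cast; ring
      rw [e2, ih x y, ih (x+1) (y+1)]
      push_cast; ring


theorem stmt_12 (a s : ℂ) (hs : s ^ 2 = 9 - 8 * a) (k : ℕ)
    (h1 : ∀ m : ℕ, m < k → a - 1 + (m : ℂ) ≠ 0)
    (h2 : ∀ m : ℕ, m < k → 1 - a - (k : ℂ) + (m : ℂ) ≠ 0)
    (h3 : ∀ m : ℕ, m < k → 2 * a - 5 / 2 - s / 2 + (m : ℂ) ≠ 0)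
    (h4 : ∀ m : ℕ, m < k → 2 * a - 5 / 2 + s / 2 + (m : ℂ) ≠ 0)
    (ha : a ≠ 1) :
    ((a + (k : ℂ) - 1) / ((a - 1) * (k.factorial : ℂ))) *
        ∑ j ∈ Finset.range (k + 1),
          poch a j * poch (2 - a - (k : ℂ)) j * poch (-(k : ℂ)) j * (-1 : ℂ) ^ j /
            (poch (a - 1) j * poch (1 - a - (k : ℂ)) j * (j.factorial : ℂ))
      = (poch (2 * a - 3 / 2 - s / 2) k * poch (2 * a - 3 / 2 + s / 2) k) /
          (poch (2 * a - 5 / 2 - s / 2) k * poch (2 * a - 5 / 2 + s / 2) k)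
        * 2 ^ k / (k.factorial : ℂ) := by
  have ha' : a - 1 ≠ 0 := sub_ne_zero.mpr ha
  rcases Nat.eq_zero_or_pos k with hk0 | hk
  · subst hk0
    simp [poch_zero]
    field_simp
    exact ha'
  set c : ℂ := a - 1 with hc
  set d : ℂ := 1 - a - (k:ℂ) with hd
  have hdne : d ≠ 0 := by simpa using h2 0 hk
  have hcne : c ≠ 0 := ha'
  -- simplify each summand
  have hterm : ∀ j ∈ Finset.range (k+1),
      poch a j * poch (2 - a - (k : ℂ)) j * poch (-(k : ℂ)) j * (-1 : ℂ) ^ j /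
        (poch (a - 1) j * poch (1 - a - (k : ℂ)) j * (j.factorial : ℂ))
      = (k.choose j : ℂ) * ((c + j) * (d + j)) / (c * d) := by
    intro j hj
    have hjk : j ≤ k := Nat.lt_succ_iff.mp (Finset.mem_range.mp hj)
    have hpc : poch c j ≠ 0 := poch_ne_zero _ _ fun m hm => h1 m (hm.trans_le hjk)
    have hpd : poch d j ≠ 0 := poch_ne_zero _ _ fun m hm => h2 m (hm.trans_le hjk)
    have e1 : poch a j * c = poch c j * (c + j) := by
      have := poch_shift c j
      have hca : c + 1 = a := by rw [hc]; ring
      rwa [hca] at this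
    have e2 : poch (2 - a - (k:ℂ)) j * d = poch d j * (d + j) := by
      have := poch_shift d j
      have hda : d + 1 = 2 - a - (k:ℂ) := by rw [hd]; ring
      rwa [hda] at this
    have e3 : poch (-(k:ℂ)) j = (-1:ℂ)^j * (k.descFactorial j : ℂ) := poch_neg_nat k j
    have e4 : (k.descFactorial j : ℂ) = (j.factorial : ℂ) * (k.choose j : ℂ) := by
      rw [← Nat.cast_mul, Nat.descFactorial_eq_factorial_mul_choose]
    have hfac : (j.factorial : ℂ) ≠ 0 := Nat.cast_ne_zero.mpr j.factorial_ne_zero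
    have hneg : ((-1:ℂ)^j) ≠ 0 := pow_ne_zero _ (by norm_num)
    rw [e3, e4]
    rw [hc, hd] at *
    have hsq : (-1:ℂ)^j * (-1)^j = 1 := by
      rw [← mul_pow]; norm_num
    rw [div_eq_div_iff (mul_ne_zero (mul_ne_zero hpc hpd) hfac) (mul_ne_zero hcne hdne)]
    linear_combination
      (poch a j * poch (2-a-(k:ℂ)) j * (j.factorial:ℂ) * (k.choose j:ℂ) * ((a-1)*(1-a-(k:ℂ)))) * hsq
      + (poch (2-a-(k:ℂ)) j * (1-a-(k:ℂ)) * (j.factorial:ℂ) * (k.choose j:ℂ)) * e1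
      + (poch (a-1) j * (a-1+(j:ℂ)) * (j.factorial:ℂ) * (k.choose j:ℂ)) * e2
  rw [Finset.sum_congr rfl hterm]
  have hsum : ∑ j ∈ Finset.range (k+1), (k.choose j : ℂ) * ((c + j) * (d + j)) / (c * d)
      = (2^k * (c*d + k*(c+d)/2 + k*(k+1)/4)) / (c * d) := by
    rw [← Finset.sum_div, binom_quad k c d]
  rw [hsum]
  set q1 : ℂ := 2 * a - 5 / 2 - s / 2 with hq1def
  set q2 : ℂ := 2 * a - 5 / 2 + s / 2 with hq2def
  have hq1 : q1 ≠ 0 := by simpa using h3 0 hk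
  have hq2 : q2 ≠ 0 := by simpa using h4 0 hk
  have hQ1 : poch q1 k ≠ 0 := poch_ne_zero _ _ h3
  have hQ2 : poch q2 k ≠ 0 := poch_ne_zero _ _ h4
  have r1 : poch (2 * a - 3 / 2 - s / 2) k = poch q1 k * (q1 + k) / q1 := by
    rw [eq_div_iff hq1]
    have := poch_shift q1 k
    have h : q1 + 1 = 2 * a - 3 / 2 - s / 2 := by rw [hq1def]; ring
    rw [h] at this
    linear_combination this
  have r2 : poch (2 * a - 3 / 2 + s / 2) k = poch q2 k * (q2 + k) / q2 := by
    rw [eq_div_iff hq2]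
    have := poch_shift q2 k
    have h : q2 + 1 = 2 * a - 3 / 2 + s / 2 := by rw [hq2def]; ring
    rw [h] at this
    linear_combination this
  rw [r1, r2]
  have key : poch q1 k * (q1 + k) / q1 * (poch q2 k * (q2 + k) / q2) / (poch q1 k * poch q2 k)
      = ((2*a - 5/2 + (k:ℂ))^2 - (9 - 8*a)/4) / (4*(a-1)^2) := by
    have e4 : q1 * q2 = 4*(a-1)^2 := by
      rw [hq1def, hq2def]; linear_combination (-1/4 : ℂ) * hs
    have e5 : (q1 + k) * (q2 + k) = (2*a - 5/2 + (k:ℂ))^2 - (9 - 8*a)/4 := by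
      rw [hq1def, hq2def]; linear_combination (-1/4 : ℂ) * hs
    rw [← e4, ← e5]
    field_simp
  rw [key]
  have hkfac : ((k.factorial : ℂ)) ≠ 0 := Nat.cast_ne_zero.mpr k.factorial_ne_zero
  have hA : a - 1 ≠ 0 := sub_ne_zero.mpr ha
  have hD : (1:ℂ) - a - (k:ℂ) ≠ 0 := by rw [← hd]; exact hdne
  rw [hc, hd]
  field_simp [hA, hD]
  ring
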